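/- Let $R/S$ be a separable ring extension with separability element $\sum_i x_i \otimes y_i \in R \otimes_S R$. Then the map $\mathcal{E} = \mathrm{End}(R_S) \to R$ given by $f \mapsto \sum_i f(x_i) y_i$ is an $R$-bimodule projection splitting the inclusion $R \hookrightarrow \mathrm{End}(R_S)$ by left multiplications; hence the extension $\mathrm{End}(R_S)/R$ is split. -/

import Mathlib

/-- Let `R/S` be a separable ring extension with separability element
`∑ᵢ xᵢ ⊗ yᵢ ∈ R ⊗_S R` (`∑ᵢ xᵢ yᵢ = 1`, and `R`-centrality encoded via all
`S`-balanced biadditive maps).  Then the map `p : End(R_S) → R`,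
`p(f) = ∑ᵢ f(xᵢ) yᵢ`, is an `R`-bimodule projection splitting the embedding of
`R` into `End(R_S)` by left multiplications: `p` is additive, `p(λ_r) = r` for the
left multiplication `λ_r`, and `p(λ_r ∘ f) = r p(f)`, `p(f ∘ λ_r) = p(f) r` for
every right `S`-linear `f`.  Hence the extension `End(R_S)/R` is split. -/
theorem biseparable_stmt12 {R : Type*} [Ring R] (S : Subring R)
    (n : ℕ) (x y : Fin n → R)
    (hunit : (∑ i, x i * y i) = 1)
    (hcas : ∀ (Z : Type*) [AddCommGroup Z] (b : R →+ R →+ Z),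
      (∀ (s : S) (a c : R), b (a * s) c = b a (s * c)) →
      ∀ r : R, (∑ i, b (r * x i) (y i)) = ∑ i, b (x i) (y i * r)) :
    (∀ f g : R →+ R,
      (∑ i, (f + g) (x i) * y i) = (∑ i, f (x i) * y i) + ∑ i, g (x i) * y i) ∧
    (∀ r : R, (∑ i, AddMonoidHom.mulLeft r (x i) * y i) = r) ∧
    (∀ f : R →+ R, (∀ (a : R) (s : S), f (a * s) = f a * s) →
      ∀ r : R,
        (∑ i, ((AddMonoidHom.mulLeft r).comp f) (x i) * y i) = r * ∑ i, f (x i) * y i ∧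
        (∑ i, (f.comp (AddMonoidHom.mulLeft r)) (x i) * y i) = (∑ i, f (x i) * y i) * r) := by
  have key : ∀ f : R →+ R, (∀ (a : R) (s : S), f (a * s) = f a * s) →
      ∀ r : R, (∑ i, f (r * x i) * y i) = ∑ i, f (x i) * (y i * r) := by
    intro f hf r
    rw [← sub_eq_zero]
    apply CharacterModule.eq_zero_of_character_apply
    intro c
    set up : AddCircle (1 : ℚ) →+ ULift (AddCircle (1 : ℚ)) :=
      AddEquiv.ulift.symm.toAddMonoidHom with hup
    have hb := hcas (ULift (AddCircle (1 : ℚ)))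
      ((AddMonoidHom.compHom (up.comp (c : R →+ AddCircle (1 : ℚ)))).comp
        (AddMonoidHom.mul.comp f))
      (fun s a c' => by simp [hup, hf, mul_assoc]) r
    rw [map_sub, sub_eq_zero]
    have h2 : up (c (∑ i, f (r * x i) * y i)) = up (c (∑ i, f (x i) * (y i * r))) := by
      exact (by simpa [← map_sum] using hb : (up.comp c) (∑ i, f (r * x i) * y i) = (up.comp c) (∑ i, f (x i) * (y i * r)))
    exact AddEquiv.ulift.symm.injective h2
  refine ⟨fun f g => by simp [Finset.sum_add_distrib, add_mul], fun r => ?_, fun f hf r => ?_⟩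
  · have := key (AddMonoidHom.id R) (fun a s => rfl) r
    simpa [← mul_assoc, ← Finset.sum_mul, hunit, AddMonoidHom.mulLeft] using this
  constructor
  · simp [AddMonoidHom.mulLeft, Finset.mul_sum, mul_assoc]
  · have := key f hf r
    simpa [AddMonoidHom.mulLeft, ← mul_assoc, ← Finset.sum_mul] using this
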